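/- arXiv:2309.06696 — 4 statements merged into one kernel-verified Lean document; each statement's English description precedes it below -/
import Mathlib

section
/- There exists an absolute constant A > 0 such that the following holds. Let H be an n-vertex graph with a strict linear order < on E(H) and an f-FD 2k-blocking set (F_e)_{e∈E(H)}, let C ≥ 1 be a parameter, and suppose every vertex of H has degree at most Δ. Then the number of walks in H with exactly k pairwise distinct edges that are chain-blocked is at most k·n·(A·Δ)^k / C. -/
open SimpleGraph

/-- `lt` is a strict linear order on the edges of `H`. -/
def IsEdgeOrder {V : Type} (H : SimpleGraph V) (lt : Sym2 V → Sym2 V → Prop) : Prop :=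
  (∀ e ∈ H.edgeSet, ¬ lt e e) ∧
  (∀ e₁ ∈ H.edgeSet, ∀ e₂ ∈ H.edgeSet, ∀ e₃ ∈ H.edgeSet, lt e₁ e₂ → lt e₂ e₃ → lt e₁ e₃) ∧
  (∀ e₁ ∈ H.edgeSet, ∀ e₂ ∈ H.edgeSet, e₁ ≠ e₂ → lt e₁ e₂ ∨ lt e₂ e₁)

/-- `Fb` is an `f`-FD `k`-blocking set for `H` with respect to the edge order `lt`:
each edge `e` gets a set `Fb e` of earlier edges of `H` with faulty-degree at most `f`,
and every cycle with at most `k` edges is "blocked" at its latest edge. -/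
def IsFDBlockingSet {V : Type} (H : SimpleGraph V) (lt : Sym2 V → Sym2 V → Prop)
    (f k : ℕ) (Fb : Sym2 V → Set (Sym2 V)) : Prop :=
  (∀ e ∈ H.edgeSet, Fb e ⊆ H.edgeSet) ∧
  (∀ e ∈ H.edgeSet, ∀ v : V, {e' ∈ Fb e | v ∈ e'}.ncard ≤ f) ∧
  (∀ e ∈ H.edgeSet, ∀ e' ∈ Fb e, lt e' e) ∧
  (∀ (v : V) (p : H.Walk v v), p.IsCycle → p.length ≤ k →
    ∀ e ∈ p.edges, (∀ e' ∈ p.edges, e' ≠ e → lt e' e) →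
      ∃ e' ∈ Fb e, e' ∈ p.edges)

/-- A walk is *chain-unblocked (with bound `b`)* if for every edge of the walk, at most `b`
edges `e` of `H` have that edge in `Fb e` and are incident to a vertex of the walk that
strictly follows that edge along the walk. -/
def ChainUnblocked {V : Type} (H : SimpleGraph V) (Fb : Sym2 V → Set (Sym2 V))
    (b : ℝ) {u v : V} (p : H.Walk u v) : Prop :=
  ∀ i : Fin p.edges.length,
    ({e ∈ H.edgeSet | p.edges.get i ∈ Fb e ∧
        ∃ x ∈ p.support.drop ((i : ℕ) + 2), x ∈ e}.ncard : ℝ) ≤ b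

/- Auxiliary lemmas -/

lemma walk_support_inj' {V : Type} {H : SimpleGraph V} :
    ∀ {u v u' v' : V} (p : H.Walk u v) (q : H.Walk u' v'),
      p.support = q.support →
      (⟨u, v, p⟩ : (a : V) × (b : V) × H.Walk a b) = ⟨u', v', q⟩ := by
  intro u v u' v' p q h
  induction p generalizing u' v' q with
  | nil =>
    cases q with
    | nil =>
      simp only [Walk.support_nil, List.cons.injEq, and_true] at h
      subst h; rfl
    | cons hb q' =>
      rw [Walk.support_nil, Walk.support_cons, q'.support_eq_cons] at h
      simp at h
  | cons ha p ih =>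
    cases q with
    | nil =>
      rw [Walk.support_nil, Walk.support_cons, p.support_eq_cons] at h
      simp at h
    | cons hb q' =>
      rw [Walk.support_cons, Walk.support_cons] at h
      simp only [List.cons.injEq] at h
      obtain ⟨rfl, h2⟩ := h
      have h3 := h2
      rw [p.support_eq_cons, q'.support_eq_cons] at h3
      simp only [List.cons.injEq] at h3
      obtain ⟨hw, -⟩ := h3
      subst hw
      have h4 := ih q' h2
      injection h4 with h5 h6
      injection h6 with h7 h8
      subst h7
      rw [heq_eq_eq] at h8
      subst h8
      rfl

lemma walk_edges_getElem {V : Type} {H : SimpleGraph V} :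
    ∀ {u v : V} (p : H.Walk u v) (s : ℕ) (h1 : s < p.edges.length)
      (h2 : s < p.support.length) (h3 : s + 1 < p.support.length),
      p.edges[s] = s(p.support[s], p.support[s+1]) := by
  intro u v p
  induction p with
  | nil => intro s h1; simp at h1
  | cons ha p ih =>
    intro s h1 h2 h3
    cases s with
    | zero =>
      simp only [Walk.edges_cons, Walk.support_cons, List.getElem_cons_zero,
        List.getElem_cons_succ]
      rw [List.getElem_of_eq p.support_eq_cons]
      simp
    | succ t =>
      simp only [Walk.edges_cons, Walk.support_cons, List.getElem_cons_succ]
      apply ih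

lemma ncard_eq_sum_fiber {α β : Type*} (s : Set α) (hs : s.Finite) (g : α → β)
    (T : Finset β) (h : ∀ a ∈ s, g a ∈ T) :
    s.ncard = ∑ b ∈ T, {a ∈ s | g a = b}.ncard := by
  classical
  rw [Set.ncard_eq_toFinset_card _ hs,
    Finset.card_eq_sum_card_fiberwise (f := g) (t := T)
      (fun a ha => h a (hs.mem_toFinset.mp ha))]
  refine Finset.sum_congr rfl fun b _ => ?_
  rw [← Set.ncard_coe_finset]
  congr 1
  ext a
  simp [hs.mem_toFinset]

lemma count_chain {V : Type} [Fintype V] (d : V) :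
    ∀ (r : ℕ) (A : ℕ → (ℕ → V) → Set V) (b : ℕ → ℕ),
      (∀ t, t < r → ∀ M M' : ℕ → V, (∀ s, s < t → M s = M' s) → A t M = A t M') →
      (∀ t, t < r → ∀ M : ℕ → V, (A t M).ncard ≤ b t) →
      {M : Fin r → V | ∀ t : Fin r, M t ∈ A t (fun s => if h : s < r then M ⟨s, h⟩ else d)}.ncard
        ≤ ∏ t ∈ Finset.range r, b t := by
  intro r
  induction r with
  | zero =>
    intro A b _ _
    calc {M : Fin 0 → V | ∀ t : Fin 0, M t ∈ A t (fun s => if h : s < 0 then M ⟨s, h⟩ else d)}.ncard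
        ≤ (Set.univ : Set (Fin 0 → V)).ncard :=
          Set.ncard_le_ncard (Set.subset_univ _) (Set.toFinite _)
      _ ≤ 1 := by rw [Set.ncard_univ]; simp [Nat.card_eq_fintype_card]
      _ = ∏ t ∈ Finset.range 0, b t := by simp
  | succ r ih =>
    intro A b hstab hb
    classical
    set S := {M : Fin (r+1) → V | ∀ t : Fin (r+1),
      M t ∈ A t (fun s => if h : s < r+1 then M ⟨s, h⟩ else d)} with hS
    set S' := {P : Fin r → V | ∀ t : Fin r,
      P t ∈ A t (fun s => if h : s < r then P ⟨s, h⟩ else d)} with hS'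
    have hmaps : ∀ M ∈ S, (M ∘ Fin.castSucc) ∈ S'.toFinite.toFinset := by
      intro M hM
      rw [Set.Finite.mem_toFinset]
      intro t
      have h1 := hM t.castSucc
      have h2 : A (t : ℕ) (fun s => if h : s < r+1 then M ⟨s, h⟩ else d)
          = A (t : ℕ) (fun s => if h : s < r then (M ∘ Fin.castSucc) ⟨s, h⟩ else d) := by
        apply hstab t (by omega)
        intro s hs
        have hs1 : s < r := lt_trans hs t.2
        have hs2 : s < r + 1 := by omega
        simp only [hs1, hs2, dif_pos, Function.comp_apply]
        rfl
      rw [Fin.coe_castSucc] at h1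
      rw [← h2]
      exact h1
    have key := ncard_eq_sum_fiber S (Set.toFinite _) (fun M => M ∘ Fin.castSucc)
      S'.toFinite.toFinset hmaps
    have hfib : ∀ P ∈ S'.toFinite.toFinset,
        {M ∈ S | M ∘ Fin.castSucc = P}.ncard ≤ b r := by
      intro P _
      have hsub : ∀ M ∈ {M ∈ S | M ∘ Fin.castSucc = P}, M (Fin.last r) ∈
          A r (fun s => if h : s < r then P ⟨s, h⟩ else d) := by
        rintro M ⟨hM, hMP⟩
        have h1 := hM (Fin.last r)
        have h2 : A r (fun s => if h : s < r+1 then M ⟨s, h⟩ else d)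
            = A r (fun s => if h : s < r then P ⟨s, h⟩ else d) := by
          apply hstab r (by omega)
          intro s hs
          have hs2 : s < r + 1 := by omega
          simp only [hs, hs2, dif_pos]
          rw [← hMP]
          rfl
        rw [Fin.val_last] at h1
        rw [← h2]
        exact h1
      have hinj : Set.InjOn (fun M : Fin (r+1) → V => M (Fin.last r))
          {M ∈ S | M ∘ Fin.castSucc = P} := by
        rintro M ⟨_, hMP⟩ M' ⟨_, hMP'⟩ hlast
        funext t
        rcases Fin.eq_castSucc_or_eq_last t with ⟨t', rfl⟩ | rfl
        · have := congrFun (hMP.trans hMP'.symm) t'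
          exact this
        · exact hlast
      calc {M ∈ S | M ∘ Fin.castSucc = P}.ncard
          ≤ (A r (fun s => if h : s < r then P ⟨s, h⟩ else d)).ncard :=
            Set.ncard_le_ncard_of_injOn _ hsub hinj (Set.toFinite _)
        _ ≤ b r := hb r (by omega) _
    calc S.ncard = ∑ P ∈ S'.toFinite.toFinset, {M ∈ S | M ∘ Fin.castSucc = P}.ncard := key
      _ ≤ ∑ _P ∈ S'.toFinite.toFinset, b r := Finset.sum_le_sum hfib
      _ = S'.ncard * b r := by
          rw [Finset.sum_const, smul_eq_mul, Set.ncard_eq_toFinset_card _ S'.toFinite]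
      _ ≤ (∏ t ∈ Finset.range r, b t) * b r := by
          apply Nat.mul_le_mul_right
          exact ih A b (fun t ht => hstab t (by omega)) (fun t ht => hb t (by omega))
      _ = ∏ t ∈ Finset.range (r+1), b t := (Finset.prod_range_succ b r).symm

/-- **chain-blocked path upper bound.** There is an absolute constant `A > 0`
such that for every `n`-vertex graph with an `f`-FD `2k`-blocking set, parameter `C ≥ 1`
and maximum degree at most `Δ`, the number of edge-simple `k`-walks that are chain-blocked
is at most `k·n·(A·Δ)^k / C`. -/
theorem chain_blocked_count :
    ∃ A : ℝ, 0 < A ∧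
      ∀ (V : Type) [Fintype V], ∀ (H : SimpleGraph V) (lt : Sym2 V → Sym2 V → Prop)
        (Fb : Sym2 V → Set (Sym2 V)) (f k Δ : ℕ) (C : ℝ),
        0 < k → IsEdgeOrder H lt → IsFDBlockingSet H lt f (2 * k) Fb → 1 ≤ C →
        (∀ v : V, (H.neighborSet v).ncard ≤ Δ) →
        ({x : (u : V) × (v : V) × H.Walk u v |
            x.2.2.length = k ∧ x.2.2.edges.Nodup ∧
            ¬ ChainUnblocked H Fb (C * f * k) x.2.2}.ncard : ℝ) ≤
          (k : ℝ) * Fintype.card V * (A * Δ) ^ k / C := by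
  refine ⟨2, by norm_num, ?_⟩
  intro V _ H lt Fb f k Δ C hk horder hFD hC hΔ
  classical
  have hC0 : (0:ℝ) < C := lt_of_lt_of_le one_pos hC
  set n := Fintype.card V with hn
  set S' := {x : (u : V) × (v : V) × H.Walk u v |
      x.2.2.length = k ∧ x.2.2.edges.Nodup ∧
      ¬ ChainUnblocked H Fb (C * f * k) x.2.2} with hS'
  have hRHS : (0:ℝ) ≤ (k : ℝ) * n * (2 * Δ) ^ k / C := by positivity
  rcases isEmpty_or_nonempty V with hV | hV
  · have : S' = ∅ := by
      ext x
      exact iff_of_false (fun _ => hV.false x.1) (fun h => h.elim)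
    rw [this]
    simpa using hRHS
  obtain ⟨d⟩ := hV
  have hS'fin : S'.Finite := by
    have hinj : Set.InjOn (fun x : (u : V) × (v : V) × H.Walk u v => x.2.2.support) S' := by
      intro x _ y _ hxy
      exact walk_support_inj' x.2.2 y.2.2 hxy
    apply Set.Finite.of_finite_image ?_ hinj
    apply (List.finite_length_eq V (k+1)).subset
    rintro l ⟨x, hx, rfl⟩
    simp only [Set.mem_setOf_eq, Walk.length_support]
    rw [hx.1]
  rcases Nat.eq_zero_or_pos f with hf0 | hf1
  · have hS'e : S' = ∅ := by
      rw [Set.eq_empty_iff_forall_notMem]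
      intro x hx
      obtain ⟨hlen, hnd, hnb⟩ := hx
      apply hnb
      intro i
      have hempty : {e ∈ H.edgeSet | x.2.2.edges.get i ∈ Fb e ∧
          ∃ y ∈ x.2.2.support.drop ((i : ℕ) + 2), y ∈ e} = ∅ := by
        rw [Set.eq_empty_iff_forall_notMem]
        rintro e ⟨heE, heFb, -⟩
        have h1 : 0 < {e' ∈ Fb e | (x.2.2.edges.get i).out.1 ∈ e'}.ncard := by
          rw [Set.ncard_pos (Set.toFinite _)]
          exact ⟨x.2.2.edges.get i, heFb, Sym2.out_fst_mem _⟩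
        have h2 := hFD.2.1 e heE (x.2.2.edges.get i).out.1
        omega
      rw [hempty]
      simp [hf0]
    rw [hS'e]
    simpa using hRHS
  set eD : Sym2 V := s(d, d) with heD
  set E : ((u : V) × (v : V) × H.Walk u v) → ℕ → Set (Sym2 V) := fun x i =>
    {e ∈ H.edgeSet | x.2.2.edges.getD i eD ∈ Fb e ∧
      ∃ y ∈ x.2.2.support.drop (i + 2), y ∈ e} with hE
  have hwit : ∀ x : (u : V) × (v : V) × H.Walk u v, ∃ i : ℕ,
      x ∈ S' → i < k ∧ C * f * k < ((E x i).ncard : ℝ) := by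
    intro x
    by_cases hx : x ∈ S'
    · obtain ⟨hlen, hnd, hnb⟩ := hx
      rw [ChainUnblocked] at hnb
      push_neg at hnb
      obtain ⟨i, hi⟩ := hnb
      have hik : (i : ℕ) < k := by
        have h1 := i.2
        have h2 : x.2.2.edges.length = k := by rw [Walk.length_edges, hlen]
        omega
      refine ⟨(i : ℕ), fun _ => ⟨hik, ?_⟩⟩
      have hgd : x.2.2.edges.getD (i : ℕ) eD = x.2.2.edges.get i := by
        rw [List.getD_eq_getElem _ _ i.2, List.get_eq_getElem]
      have hset : E x (i : ℕ) = {e ∈ H.edgeSet | x.2.2.edges.get i ∈ Fb e ∧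
          ∃ y ∈ x.2.2.support.drop ((i : ℕ) + 2), y ∈ e} := by
        rw [hE]
        simp only [hgd]
      rw [hset]
      exact hi
    · exact ⟨0, fun h => absurd h hx⟩
  choose iF hiF using hwit
  set m : ℕ := Nat.floor (C * f * k) + 1 with hm
  have hmle : C * f * k ≤ (m : ℝ) := by
    rw [hm]; push_cast
    exact (Nat.lt_floor_add_one _).le
  set T : Set ((((u : V) × (v : V) × H.Walk u v)) × Sym2 V) :=
    {z | z.1 ∈ S' ∧ z.2 ∈ E z.1 (iF z.1)} with hT
  have hTfin : T.Finite := by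
    apply (hS'fin.prod (Set.finite_univ (α := Sym2 V))).subset
    intro z hz
    exact ⟨hz.1, trivial⟩
  have hEge : ∀ x ∈ S', m ≤ (E x (iF x)).ncard := by
    intro x hx
    have := (hiF x hx).2
    have h2 : Nat.floor (C * f * k) < (E x (iF x)).ncard :=
      (Nat.floor_lt (by positivity)).mpr this
    omega
  have hlow : S'.ncard * m ≤ T.ncard := by
    have key := ncard_eq_sum_fiber T hTfin Prod.fst hS'fin.toFinset
      (fun z hz => hS'fin.mem_toFinset.mpr hz.1)
    rw [key]
    have hfib : ∀ x ∈ hS'fin.toFinset, m ≤ {z ∈ T | z.1 = x}.ncard := by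
      intro x hx
      rw [Set.Finite.mem_toFinset] at hx
      have himg : {z ∈ T | z.1 = x} = (fun e => (x, e)) '' (E x (iF x)) := by
        ext z
        constructor
        · rintro ⟨⟨hz1, hz2⟩, hfst⟩
          refine ⟨z.2, ?_, ?_⟩
          · rw [← hfst]; exact hz2
          · rw [← hfst]
        · rintro ⟨e, he, rfl⟩
          exact ⟨⟨hx, he⟩, rfl⟩
      rw [himg, Set.ncard_image_of_injective _ (fun a b h => congrArg Prod.snd h)]
      exact hEge x hx
    calc S'.ncard * m = hS'fin.toFinset.card • m := by
          rw [Set.ncard_eq_toFinset_card _ hS'fin, smul_eq_mul]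
      _ ≤ ∑ x ∈ hS'fin.toFinset, {z ∈ T | z.1 = x}.ncard :=
          Finset.card_nsmul_le_sum _ _ _ hfib
  have hjy : ∀ z : (((u : V) × (v : V) × H.Walk u v)) × Sym2 V, ∃ (j : ℕ) (y : V),
      z ∈ T → iF z.1 + 2 ≤ j ∧ j ≤ k ∧ s(z.1.2.2.support.getD j d, y) = z.2 := by
    intro z
    by_cases hz : z ∈ T
    · obtain ⟨hz1, hz2⟩ := hz
      obtain ⟨heE, heFb, yy, hyy, hyye⟩ := hz2
      obtain ⟨t, ht, hget⟩ := List.mem_iff_getElem.mp hyy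
      have hlen : z.1.2.2.support.length = k + 1 := by
        rw [Walk.length_support, hz1.1]
      have hdl : (z.1.2.2.support.drop (iF z.1 + 2)).length = k + 1 - (iF z.1 + 2) := by
        rw [List.length_drop, hlen]
      rw [hdl] at ht
      have hj1 : iF z.1 + 2 + t < k + 1 := by omega
      have hgd : z.1.2.2.support.getD (iF z.1 + 2 + t) d = yy := by
        rw [List.getD_eq_getElem _ _ (by omega : iF z.1 + 2 + t < z.1.2.2.support.length)]
        rw [← hget, List.getElem_drop]
      obtain ⟨y, hy⟩ := Sym2.mem_iff_exists.mp hyye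
      exact ⟨iF z.1 + 2 + t, y, fun _ => ⟨by omega, by omega, by rw [hgd]; exact hy.symm⟩⟩
    · exact ⟨0, d, fun h => absurd h hz⟩
  choose jF yF hjy' using hjy
  have hcls : ∀ z ∈ T, (iF z.1, jF z) ∈ (Finset.range k) ×ˢ (Finset.range (k+1)) := by
    intro z hz
    rw [Finset.mem_product, Finset.mem_range, Finset.mem_range]
    refine ⟨(hiF z.1 hz.1).1, ?_⟩
    have := (hjy' z hz).2.1
    omega
  have key2 := ncard_eq_sum_fiber T hTfin (fun z => (iF z.1, jF z))
    ((Finset.range k) ×ˢ (Finset.range (k+1))) hcls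
  have hfib2 : ∀ ab ∈ (Finset.range k) ×ˢ (Finset.range (k+1)),
      {z ∈ T | (iF z.1, jF z) = ab}.ncard ≤ n * (f * Δ ^ k) := by
    rintro ⟨a, b⟩ _
    set F := {z ∈ T | (iF z.1, jF z) = (a, b)} with hF
    rcases Set.eq_empty_or_nonempty F with hFe | ⟨z₀, hz₀⟩
    · rw [hFe]; simp
    obtain ⟨hz₀T, hz₀c⟩ := hz₀
    have hz₀c1 : iF z₀.1 = a := congrArg Prod.fst hz₀c
    have hz₀c2 : jF z₀ = b := congrArg Prod.snd hz₀c
    have hab1 : a + 2 ≤ b := by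
      have := (hjy' z₀ hz₀T).1; omega
    have hab2 : b ≤ k := by
      have := (hjy' z₀ hz₀T).2.1; omega
    set q := b - a + 1 with hq
    have hq3 : 3 ≤ q := by omega
    have hqk : q < k + 2 := by omega
    set prev : ℕ → ℕ := fun t => if t = 1 ∨ t = 2 ∨ t = b + 2 then 0 else t - 1 with hprev
    set A : ℕ → (ℕ → V) → Set V := fun t g =>
      if t = 0 then Set.univ
      else if t = q then {w : V | s(w, g (q - 1)) ∈ Fb s(g 0, g 1) ∧ s(g 0, g 1) ∈ H.edgeSet}
      else H.neighborSet (g (prev t)) with hA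
    set bf : ℕ → ℕ := fun t => if t = 0 then n else if t = q then f else Δ with hbf
    have hprevlt : ∀ t : ℕ, t ≠ 0 → prev t < t := by
      intro t h
      rw [hprev]
      simp only
      split_ifs <;> omega
    have hstab : ∀ t, t < k + 2 → ∀ M M' : ℕ → V,
        (∀ s, s < t → M s = M' s) → A t M = A t M' := by
      intro t ht M M' hag
      rw [hA]
      simp only
      by_cases h0 : t = 0
      · simp [h0]
      by_cases hqt : t = q
      · rw [if_neg h0, if_pos hqt, if_neg h0, if_pos hqt]
        rw [hag 0 (by omega), hag 1 (by omega), hag (q - 1) (by omega)]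
      · rw [if_neg h0, if_neg hqt, if_neg h0, if_neg hqt,
          hag (prev t) (hprevlt t h0)]
    have hbd : ∀ t, t < k + 2 → ∀ M : ℕ → V, (A t M).ncard ≤ bf t := by
      intro t ht M
      rw [hA, hbf]
      simp only
      by_cases h0 : t = 0
      · rw [if_pos h0, if_pos h0, Set.ncard_univ]
        exact le_of_eq Nat.card_eq_fintype_card
      by_cases hqt : t = q
      · simp only [if_neg h0, if_pos hqt]
        by_cases he : s(M 0, M 1) ∈ H.edgeSet
        · calc {w : V | s(w, M (q - 1)) ∈ Fb s(M 0, M 1) ∧ s(M 0, M 1) ∈ H.edgeSet}.ncard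
              ≤ {e' ∈ Fb s(M 0, M 1) | M (q - 1) ∈ e'}.ncard := by
                apply Set.ncard_le_ncard_of_injOn (fun w => s(w, M (q - 1)))
                · rintro w ⟨hw1, -⟩
                  exact ⟨hw1, Sym2.mem_mk_right _ _⟩
                · intro w _ w' _ hww
                  exact Sym2.congr_left.mp hww
            _ ≤ f := hFD.2.1 _ he _
        · have hemp : {w : V | s(w, M (q - 1)) ∈ Fb s(M 0, M 1) ∧ s(M 0, M 1) ∈ H.edgeSet} = ∅ := by
            rw [Set.eq_empty_iff_forall_notMem]
            rintro w ⟨-, hw2⟩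
            exact he hw2
          rw [hemp]
          simp
      · simp only [if_neg h0, if_neg hqt]
        exact hΔ _
    have hprod : ∏ t ∈ Finset.range (k + 2), bf t = n * (f * Δ ^ k) := by
      have h0m : (0 : ℕ) ∈ Finset.range (k + 2) := by simp
      rw [← Finset.mul_prod_erase _ _ h0m]
      have hqm : q ∈ (Finset.range (k + 2)).erase 0 := by
        rw [Finset.mem_erase]
        exact ⟨by omega, by simp [hqk]⟩
      rw [← Finset.mul_prod_erase _ _ hqm]
      have hcon : ∀ t ∈ ((Finset.range (k + 2)).erase 0).erase q, bf t = Δ := by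
        intro t htm
        rw [Finset.mem_erase, Finset.mem_erase] at htm
        rw [hbf]
        simp only
        rw [if_neg htm.2.1, if_neg htm.1]
      rw [Finset.prod_congr rfl hcon, Finset.prod_const]
      have hcard : (((Finset.range (k + 2)).erase 0).erase q).card = k := by
        rw [Finset.card_erase_of_mem hqm, Finset.card_erase_of_mem h0m, Finset.card_range]
        omega
      rw [hcard]
      have e1 : bf 0 = n := by simp [hbf]
      have e2 : bf q = f := by
        have hq0 : ¬ q = 0 := by omega
        simp [hbf, hq0]
      rw [e1, e2]
    set MM : ((((u : V) × (v : V) × H.Walk u v)) × Sym2 V) → Fin (k + 2) → V := fun z t =>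
      if (t : ℕ) = 0 then z.1.2.2.support.getD (jF z) d
      else if (t : ℕ) = 1 then yF z
      else if (t : ℕ) ≤ jF z + 1 then z.1.2.2.support.getD (jF z + 1 - (t : ℕ)) d
      else z.1.2.2.support.getD ((t : ℕ) - 1) d with hMM
    have hMeval : ∀ z ∈ F, ∀ (s : ℕ) (h : s < k + 2), MM z ⟨s, h⟩ =
        (if s = 0 then z.1.2.2.support.getD b d
        else if s = 1 then yF z
        else if s ≤ b + 1 then z.1.2.2.support.getD (b + 1 - s) d
        else z.1.2.2.support.getD (s - 1) d) := by
      rintro z ⟨-, hzc⟩ s h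
      have hcb : jF z = b := congrArg Prod.snd hzc
      rw [hMM]
      simp only [hcb]
    set Vset := {M : Fin (k + 2) → V | ∀ t : Fin (k + 2),
        M t ∈ A (t : ℕ) (fun s => if h : s < k + 2 then M ⟨s, h⟩ else d)} with hVset
    have hmapsV : ∀ z ∈ F, MM z ∈ Vset := by
      rintro z hzF
      obtain ⟨hzT, hzc⟩ := hzF
      have hca : iF z.1 = a := congrArg Prod.fst hzc
      obtain ⟨hjy1, hjy2, hjy3⟩ := hjy' z hzT
      have hjy3' : s(z.1.2.2.support.getD b d, yF z) = z.2 := by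
        have hcb : jF z = b := congrArg Prod.snd hzc
        rw [← hcb]
        exact hjy3
      have hlen : z.1.2.2.support.length = k + 1 := by
        rw [Walk.length_support, hzT.1.1]
      have hadj : ∀ s : ℕ, s + 1 ≤ k →
          H.Adj (z.1.2.2.support.getD s d) (z.1.2.2.support.getD (s + 1) d) := by
        intro s hs
        have hc := List.isChain_iff_getElem.mp (z.1.2.2.isChain_adj_support) s (by omega)
        rw [List.getD_eq_getElem _ _ (by omega), List.getD_eq_getElem _ _ (by omega)]
        exact hc
      obtain ⟨heE, heFb, -⟩ := hzT.2
      have heFb' : z.1.2.2.edges.getD a eD ∈ Fb z.2 := by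
        rw [← hca]; exact heFb
      have hea : a < z.1.2.2.edges.length := by
        rw [Walk.length_edges, hzT.1.1]; omega
      have hedge : z.1.2.2.edges.getD a eD =
          s(z.1.2.2.support.getD a d, z.1.2.2.support.getD (a + 1) d) := by
        rw [List.getD_eq_getElem _ _ hea,
          walk_edges_getElem z.1.2.2 a hea (by omega) (by omega),
          List.getD_eq_getElem _ _ (by omega), List.getD_eq_getElem _ _ (by omega)]
      intro t
      have ht2 := t.2
      set g := fun s => if h : s < k + 2 then MM z ⟨s, h⟩ else d with hg
      have hgev : ∀ (s : ℕ), s < k + 2 → g s =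
          (if s = 0 then z.1.2.2.support.getD b d
          else if s = 1 then yF z
          else if s ≤ b + 1 then z.1.2.2.support.getD (b + 1 - s) d
          else z.1.2.2.support.getD (s - 1) d) := by
        intro s h
        rw [hg]
        simp only
        rw [dif_pos h, hMeval z ⟨hzT, hzc⟩ s h]
      have hMt : MM z t =
          (if (t : ℕ) = 0 then z.1.2.2.support.getD b d
          else if (t : ℕ) = 1 then yF z
          else if (t : ℕ) ≤ b + 1 then z.1.2.2.support.getD (b + 1 - (t : ℕ)) d
          else z.1.2.2.support.getD ((t : ℕ) - 1) d) :=
        hMeval z ⟨hzT, hzc⟩ (t : ℕ) t.2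
      have e0 : g 0 = z.1.2.2.support.getD b d := by
        rw [hgev 0 (by omega)]; simp
      have e1 : g 1 = yF z := by
        rw [hgev 1 (by omega)]; simp
      rw [hA]
      simp only
      by_cases h0 : (t : ℕ) = 0
      · rw [if_pos h0]; trivial
      by_cases hqt : (t : ℕ) = q
      · rw [if_neg h0, if_pos hqt]
        have eq1 : g (q - 1) = z.1.2.2.support.getD (a + 1) d := by
          rw [hgev (q - 1) (by omega), if_neg (by omega), if_neg (by omega),
            if_pos (by omega)]
          congr 1
          omega
        have eMt : MM z t = z.1.2.2.support.getD a d := by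
          rw [hMt, if_neg h0, if_neg (by omega), if_pos (by omega)]
          congr 1
          omega
        rw [Set.mem_setOf_eq, e0, e1, eq1, eMt, hjy3']
        refine ⟨?_, heE⟩
        rw [← hedge]
        exact heFb'
      rw [if_neg h0, if_neg hqt]
      by_cases h1 : (t : ℕ) = 1
      · have hp : prev (t : ℕ) = 0 := by
          rw [hprev]; simp only; exact if_pos (Or.inl h1)
        rw [hp, e0, hMt, if_neg h0, if_pos h1, SimpleGraph.mem_neighborSet,
          ← SimpleGraph.mem_edgeSet, hjy3']
        exact heE
      by_cases h2 : (t : ℕ) = 2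
      · have hp : prev (t : ℕ) = 0 := by
          rw [hprev]; simp only; exact if_pos (Or.inr (Or.inl h2))
        rw [hp, e0, hMt, if_neg h0, if_neg h1, if_pos (by omega),
          SimpleGraph.mem_neighborSet]
        have harith : b + 1 - (t : ℕ) = b - 1 := by omega
        have hb1 : b - 1 + 1 = b := by omega
        have hAdj := hadj (b - 1) (by omega)
        rw [hb1] at hAdj
        rw [harith]
        exact hAdj.symm
      by_cases hb2 : (t : ℕ) = b + 2
      · have hp : prev (t : ℕ) = 0 := by
          rw [hprev]; simp only; exact if_pos (Or.inr (Or.inr hb2))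
        rw [hp, e0, hMt, if_neg h0, if_neg h1, if_neg (by omega : ¬ (t : ℕ) ≤ b + 1),
          SimpleGraph.mem_neighborSet]
        have harith : (t : ℕ) - 1 = b + 1 := by omega
        rw [harith]
        exact hadj b (by omega)
      have hp : prev (t : ℕ) = (t : ℕ) - 1 := by
        rw [hprev]; simp only
        rw [if_neg]
        push_neg
        exact ⟨h1, h2, hb2⟩
      rw [hp]
      by_cases hle : (t : ℕ) ≤ b + 1
      · have eg : g ((t : ℕ) - 1) = z.1.2.2.support.getD (b + 2 - (t : ℕ)) d := by
          rw [hgev ((t : ℕ) - 1) (by omega), if_neg (by omega), if_neg (by omega),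
            if_pos (by omega)]
          congr 1
          omega
        rw [eg, hMt, if_neg h0, if_neg h1, if_pos hle, SimpleGraph.mem_neighborSet]
        have harith : (b + 1 - (t : ℕ)) + 1 = b + 2 - (t : ℕ) := by omega
        have hAdj := hadj (b + 1 - (t : ℕ)) (by omega)
        rw [harith] at hAdj
        exact hAdj.symm
      · have eg : g ((t : ℕ) - 1) = z.1.2.2.support.getD ((t : ℕ) - 2) d := by
          rw [hgev ((t : ℕ) - 1) (by omega), if_neg (by omega), if_neg (by omega),
            if_neg (by omega)]
          congr 1 <;> omega
        rw [eg, hMt, if_neg h0, if_neg h1, if_neg hle, SimpleGraph.mem_neighborSet]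
        have harith : ((t : ℕ) - 2) + 1 = (t : ℕ) - 1 := by omega
        have hAdj := hadj ((t : ℕ) - 2) (by omega)
        rw [harith] at hAdj
        exact hAdj
    have hinjV : Set.InjOn MM F := by
      rintro z hz z' hz' hMeq
      obtain ⟨hzT, hzc⟩ := hz
      obtain ⟨hzT', hzc'⟩ := hz'
      have hsupL : z.1.2.2.support.length = k + 1 := by
        rw [Walk.length_support, hzT.1.1]
      have hsupL' : z'.1.2.2.support.length = k + 1 := by
        rw [Walk.length_support, hzT'.1.1]
      have hLL : z.1.2.2.support = z'.1.2.2.support := by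
        apply List.ext_getElem (by omega)
        intro s hs1 hs2
        have hsk : s < k + 1 := by omega
        have hcommon : z.1.2.2.support.getD s d = z'.1.2.2.support.getD s d := by
          rcases lt_trichotomy s b with hsb | hsb | hsb
          · have hc := congrFun hMeq ⟨b + 1 - s, by omega⟩
            rw [hMeval z ⟨hzT, hzc⟩ (b + 1 - s) (by omega),
              hMeval z' ⟨hzT', hzc'⟩ (b + 1 - s) (by omega)] at hc
            simp only [if_neg (by omega : ¬ (b + 1 - s = 0)),
              if_neg (by omega : ¬ (b + 1 - s = 1)),
              if_pos (by omega : b + 1 - s ≤ b + 1)] at hc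
            have harith : b + 1 - (b + 1 - s) = s := by omega
            rw [harith] at hc
            exact hc
          · have hc := congrFun hMeq ⟨0, by omega⟩
            rw [hMeval z ⟨hzT, hzc⟩ 0 (by omega),
              hMeval z' ⟨hzT', hzc'⟩ 0 (by omega)] at hc
            simp only [if_pos rfl] at hc
            rw [hsb]
            exact hc
          · have hc := congrFun hMeq ⟨s + 1, by omega⟩
            rw [hMeval z ⟨hzT, hzc⟩ (s + 1) (by omega),
              hMeval z' ⟨hzT', hzc'⟩ (s + 1) (by omega)] at hc
            simp only [if_neg (by omega : ¬ (s + 1 = 0)),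
              if_neg (by omega : ¬ (s + 1 = 1)),
              if_neg (by omega : ¬ (s + 1 ≤ b + 1))] at hc
            have harith : s + 1 - 1 = s := by omega
            rw [harith] at hc
            exact hc
        rw [List.getD_eq_getElem _ _ hs1, List.getD_eq_getElem _ _ hs2] at hcommon
        exact hcommon
      have h1eq : z.1 = z'.1 := walk_support_inj' z.1.2.2 z'.1.2.2 hLL
      have hyeq : yF z = yF z' := by
        have hc := congrFun hMeq ⟨1, by omega⟩
        rw [hMeval z ⟨hzT, hzc⟩ 1 (by omega),
          hMeval z' ⟨hzT', hzc'⟩ 1 (by omega)] at hc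
        simpa using hc
      have h2eq : z.2 = z'.2 := by
        have hcb : jF z = b := congrArg Prod.snd hzc
        have hcb' : jF z' = b := congrArg Prod.snd hzc'
        rw [← (hjy' z hzT).2.2, ← (hjy' z' hzT').2.2, hcb, hcb', hLL, hyeq]
      exact Prod.ext h1eq h2eq
    calc F.ncard ≤ Vset.ncard :=
        Set.ncard_le_ncard_of_injOn MM hmapsV hinjV (Set.toFinite _)
      _ ≤ ∏ t ∈ Finset.range (k + 2), bf t := by
          rw [hVset]
          exact count_chain d (k + 2) A bf hstab hbd
      _ = n * (f * Δ ^ k) := hprod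
  have hup : T.ncard ≤ (k * (k + 1)) * (n * (f * Δ ^ k)) := by
    calc T.ncard = _ := key2
      _ ≤ ((Finset.range k) ×ˢ (Finset.range (k + 1))).card • (n * (f * Δ ^ k)) :=
          Finset.sum_le_card_nsmul _ _ _ (fun ab hab => hfib2 ab hab)
      _ = (k * (k + 1)) * (n * (f * Δ ^ k)) := by
          rw [Finset.card_product, Finset.card_range, Finset.card_range, smul_eq_mul]
  have h2k : ((k : ℝ) + 1) ≤ (2 : ℝ) ^ k * k := by
    have h2 : (2 : ℝ) ≤ 2 ^ k := by
      calc (2 : ℝ) = 2 ^ 1 := (pow_one 2).symm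
        _ ≤ 2 ^ k := pow_le_pow_right₀ one_le_two hk
    have hk1 : (1 : ℝ) ≤ (k : ℝ) := by exact_mod_cast hk
    nlinarith
  have hcomb : (S'.ncard : ℝ) * (C * f * k) ≤
      (k : ℝ) * ((k : ℝ) + 1) * ((n : ℝ) * ((f : ℝ) * (Δ : ℝ) ^ k)) := by
    have h1 : (S'.ncard * m : ℕ) ≤ (k * (k + 1)) * (n * (f * Δ ^ k)) := le_trans hlow hup
    have h1' : (S'.ncard : ℝ) * (m : ℝ) ≤
        (k : ℝ) * ((k : ℝ) + 1) * ((n : ℝ) * ((f : ℝ) * (Δ : ℝ) ^ k)) := by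
      exact_mod_cast h1
    calc (S'.ncard : ℝ) * (C * f * k) ≤ (S'.ncard : ℝ) * (m : ℝ) :=
        mul_le_mul_of_nonneg_left hmle (by positivity)
      _ ≤ _ := h1'
  rw [le_div_iff₀ hC0]
  have hfk0 : (0 : ℝ) < (f : ℝ) * (k : ℝ) :=
    mul_pos (by exact_mod_cast hf1) (by exact_mod_cast hk)
  have hmain : ((S'.ncard : ℝ) * C) * ((f : ℝ) * (k : ℝ)) ≤
      ((k : ℝ) * (n : ℝ) * (2 * (Δ : ℝ)) ^ k) * ((f : ℝ) * (k : ℝ)) := by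
    calc ((S'.ncard : ℝ) * C) * ((f : ℝ) * (k : ℝ))
        = (S'.ncard : ℝ) * (C * f * k) := by ring
      _ ≤ (k : ℝ) * ((k : ℝ) + 1) * ((n : ℝ) * ((f : ℝ) * (Δ : ℝ) ^ k)) := hcomb
      _ = ((k : ℝ) + 1) * ((k : ℝ) * (n : ℝ) * (f : ℝ) * (Δ : ℝ) ^ k) := by ring
      _ ≤ ((2 : ℝ) ^ k * (k : ℝ)) * ((k : ℝ) * (n : ℝ) * (f : ℝ) * (Δ : ℝ) ^ k) :=
          mul_le_mul_of_nonneg_right h2k (by positivity)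
      _ = ((k : ℝ) * (n : ℝ) * (2 * (Δ : ℝ)) ^ k) * ((f : ℝ) * (k : ℝ)) := by
          rw [mul_pow]
          ring
  exact le_of_mul_le_mul_right hmain hfk0
end

section
/- There exists an absolute constant A > 0 such that the following holds. Let H be an n-vertex graph with a strict linear order < on E(H) and an f-FD 2k-blocking set (F_e)_{e∈E(H)}, and suppose every vertex of H has degree at most Δ. Then the number of walks in H with exactly k pairwise distinct edges that are blocked is at most A·k^2·n·f·Δ^{k−1}. -/
open SimpleGraph


/-- A walk is *blocked* if it contains two edges `e, e'` with `e' ∈ Fb e`. -/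
def Blocked {V : Type} {H : SimpleGraph V} (Fb : Sym2 V → Set (Sym2 V))
    {u v : V} (p : H.Walk u v) : Prop :=
  ∃ e ∈ p.edges, ∃ e' ∈ p.edges, e' ∈ Fb e

private lemma walk_ext'
 {V : Type} {H : SimpleGraph V} {u v : V}
    (p : H.Walk u v) : ∀ (q : H.Walk u v), p.length = q.length →
    (∀ t, p.getVert t = q.getVert t) → p = q := by
  induction p with
  | nil =>
    intro q hl _
    cases q with
    | nil => rfl
    | cons h' q => simp at hl
  | cons ha p ih =>
    intro q hl hv
    cases q with
    | nil => simp at hl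
    | cons hb q =>
      have h1 := hv 1
      simp only [Walk.getVert_cons_succ, Walk.getVert_zero] at h1
      subst h1
      rw [ih q (by simpa using hl) (fun t => by simpa using hv (t+1))]

private lemma exists_index_of_mem_edges {V : Type} {H : SimpleGraph V} {u v : V}
    (p : H.Walk u v) {e : Sym2 V} (he : e ∈ p.edges) :
    ∃ t, t < p.length ∧ e = s(p.getVert t, p.getVert (t+1)) := by
  induction p with
  | nil => simp at he
  | cons ha p ih =>
    rw [Walk.edges_cons, List.mem_cons] at he
    rcases he with rfl | he
    · exact ⟨0, by simp, by simp⟩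
    · obtain ⟨t, ht, rfl⟩ := ih he
      exact ⟨t+1, by simpa using Nat.succ_lt_succ ht, by simp⟩

private lemma exists_injOn_nat {α : Type*} {s : Set α} {m : ℕ} (hs : s.Finite)
    (hm : s.ncard ≤ m) : ∃ g : α → ℕ, (∀ a ∈ s, g a < m) ∧ Set.InjOn g s := by
  classical
  refine ⟨fun a => hs.toFinset.toList.idxOf a, fun a ha => ?_, fun a ha b hb hab => ?_⟩
  · have hmem : a ∈ hs.toFinset.toList := by simp [ha]
    have h1 : hs.toFinset.toList.idxOf a < hs.toFinset.toList.length :=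
      List.idxOf_lt_length_iff.2 hmem
    have h2 : hs.toFinset.toList.length = s.ncard := by
      rw [Finset.length_toList, Set.ncard_eq_toFinset_card _ hs]
    show List.idxOf a hs.toFinset.toList < m
    omega
  · exact (List.idxOf_inj (by simp [ha])).1 hab

private def Wrev {V : Type} {H : SimpleGraph V} (y : (u : V) × (v : V) × H.Walk u v) :
    (u : V) × (v : V) × H.Walk u v := ⟨y.2.1, y.1, y.2.2.reverse⟩

private lemma Wrev_Wrev {V : Type} {H : SimpleGraph V} (y : (u : V) × (v : V) × H.Walk u v) :
    Wrev (Wrev y) = y := by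
  obtain ⟨u, v, p⟩ := y
  simp [Wrev]

private lemma sigma_walk_ext {V : Type} {H : SimpleGraph V}
    (a b : (u : V) × (v : V) × H.Walk u v) (hl : a.2.2.length = b.2.2.length)
    (h1 : a.1 = b.1) (h2 : a.2.1 = b.2.1)
    (hv : ∀ t, a.2.2.getVert t = b.2.2.getVert t) : a = b := by
  obtain ⟨u1, v1, p1⟩ := a
  obtain ⟨u2, v2, p2⟩ := b
  dsimp at h1 h2 hl hv
  subst h1; subst h2
  rw [walk_ext' p1 p2 hl hv]

/-- **blocked path upper bound.** There is an absolute constant `A > 0` such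
that for every `n`-vertex graph with an `f`-FD `2k`-blocking set and maximum degree at most
`Δ`, the number of edge-simple `k`-walks that are blocked is at most `A·k²·n·f·Δ^{k−1}`. -/
theorem blocked_count :
    ∃ A : ℝ, 0 < A ∧
      ∀ (V : Type) [Fintype V], ∀ (H : SimpleGraph V) (lt : Sym2 V → Sym2 V → Prop)
        (Fb : Sym2 V → Set (Sym2 V)) (f k Δ : ℕ),
        0 < k → IsEdgeOrder H lt → IsFDBlockingSet H lt f (2 * k) Fb →
        (∀ v : V, (H.neighborSet v).ncard ≤ Δ) →
        ({x : (u : V) × (v : V) × H.Walk u v |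
            x.2.2.length = k ∧ x.2.2.edges.Nodup ∧ Blocked Fb x.2.2}.ncard : ℝ) ≤
          A * (k : ℝ) ^ 2 * Fintype.card V * f * (Δ : ℝ) ^ (k - 1) := by
  refine ⟨2, by norm_num, ?_⟩
  intro V _ H lt Fb f k Δ hk hord hblock hdeg
  classical
  set S := {x : (u : V) × (v : V) × H.Walk u v |
      x.2.2.length = k ∧ x.2.2.edges.Nodup ∧ Blocked Fb x.2.2} with hSdef
  have hgV : ∀ a : V, ∃ g : V → ℕ, (∀ b ∈ H.neighborSet a, g b < Δ) ∧
      Set.InjOn g (H.neighborSet a) :=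
    fun a => exists_injOn_nat (Set.toFinite _) (hdeg a)
  choose gV hgV1 hgV2 using hgV
  have hgFex : ∀ (e : Sym2 V) (a : V), ∃ g : Sym2 V → ℕ,
      e ∈ H.edgeSet → (∀ e' ∈ {e' ∈ Fb e | a ∈ e'}, g e' < f) ∧
        Set.InjOn g {e' ∈ Fb e | a ∈ e'} := by
    intro e a
    by_cases he : e ∈ H.edgeSet
    · obtain ⟨g, hg1, hg2⟩ := exists_injOn_nat (Set.toFinite _) (hblock.2.1 e he a)
      exact ⟨g, fun _ => ⟨hg1, hg2⟩⟩
    · exact ⟨fun _ => 0, fun h => absurd h he⟩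
  choose gF hgF using hgFex
  have choice2 : ∀ x : ↥S, ∃ (b : Bool) (y : (u : V) × (v : V) × H.Walk u v) (i j : ℕ),
      x.1 = (if b then Wrev y else y) ∧ y.2.2.length = k ∧ i < j ∧ j < k ∧
      s(y.2.2.getVert j, y.2.2.getVert (j+1)) ∈ Fb s(y.2.2.getVert i, y.2.2.getVert (i+1)) := by
    rintro ⟨⟨u, v, p⟩, hx⟩
    simp only [hSdef, Set.mem_setOf_eq] at hx
    obtain ⟨hlen, hnod, hbl⟩ := hx
    unfold Blocked at hbl
    obtain ⟨e, he, e', he', hee⟩ := hbl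
    obtain ⟨i, hi, rfl⟩ := exists_index_of_mem_edges p he
    obtain ⟨j, hj, rfl⟩ := exists_index_of_mem_edges p he'
    have heS : s(p.getVert i, p.getVert (i+1)) ∈ H.edgeSet := p.edges_subset_edgeSet he
    have hne : i ≠ j := by
      rintro rfl
      exact hord.1 _ heS (hblock.2.2.1 _ heS _ hee)
    have hik : i < k := hlen ▸ hi
    have hjk : j < k := hlen ▸ hj
    rcases lt_or_gt_of_ne hne with hij | hij
    · exact ⟨false, ⟨u, v, p⟩, i, j, by simp, hlen, hij, hjk, hee⟩
    · refine ⟨true, Wrev ⟨u, v, p⟩, k-1-i, k-1-j, ?_, ?_, by omega, by omega, ?_⟩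
      · rw [if_pos rfl, Wrev_Wrev]
      · simp [Wrev, hlen]
      · show s(p.reverse.getVert (k-1-j), p.reverse.getVert (k-1-j+1)) ∈
          Fb s(p.reverse.getVert (k-1-i), p.reverse.getVert (k-1-i+1))
        have e1 : s(p.reverse.getVert (k-1-j), p.reverse.getVert (k-1-j+1))
            = s(p.getVert j, p.getVert (j+1)) := by
          rw [Walk.getVert_reverse, Walk.getVert_reverse, hlen,
            show k - (k-1-j) = j+1 by omega, show k - (k-1-j+1) = j by omega, Sym2.eq_swap]
        have e2 : s(p.reverse.getVert (k-1-i), p.reverse.getVert (k-1-i+1))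
            = s(p.getVert i, p.getVert (i+1)) := by
          rw [Walk.getVert_reverse, Walk.getVert_reverse, hlen,
            show k - (k-1-i) = i+1 by omega, show k - (k-1-i+1) = i by omega, Sym2.eq_swap]
        rw [e1, e2]
        exact hee
  choose FL Y II JJ hY hYlen hIJ hJk hmem using choice2
  have hadjY : ∀ (x : ↥S) (t : ℕ), t < k →
      H.Adj ((Y x).2.2.getVert t) ((Y x).2.2.getVert (t+1)) :=
    fun x t ht => (Y x).2.2.adj_getVert_succ (by rw [hYlen x]; exact ht)
  have heI : ∀ x : ↥S,
      s((Y x).2.2.getVert (II x), (Y x).2.2.getVert (II x + 1)) ∈ H.edgeSet :=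
    fun x => (hadjY x _ (lt_trans (hIJ x) (hJk x)))
  set Φ : ↥S → Bool × Fin k × Fin k × V × Fin f × (Fin (k-1) → Fin Δ) :=
    fun x => ⟨FL x, ⟨II x, lt_trans (hIJ x) (hJk x)⟩, ⟨JJ x, hJk x⟩, (Y x).2.2.getVert 0,
      ⟨gF (s((Y x).2.2.getVert (II x), (Y x).2.2.getVert (II x + 1))) ((Y x).2.2.getVert (JJ x))
          (s((Y x).2.2.getVert (JJ x), (Y x).2.2.getVert (JJ x + 1))),
        (hgF _ _ (heI x)).1 _ (Set.mem_sep (hmem x) (Sym2.mem_mk_left _ _))⟩,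
      fun t => ⟨gV ((Y x).2.2.getVert (if (t:ℕ) < JJ x then (t:ℕ) else (t:ℕ)+1))
          ((Y x).2.2.getVert ((if (t:ℕ) < JJ x then (t:ℕ) else (t:ℕ)+1)+1)),
        hgV1 _ _ ((H.mem_neighborSet _ _).2 (hadjY x _ (by
          rcases t with ⟨t, ht⟩
          have h2 := hJk x
          dsimp only
          split <;> omega)))⟩⟩
    with hΦ
  have hinj : Function.Injective Φ := by
    intro x y hxy
    simp only [hΦ, Prod.mk.injEq, Fin.mk.injEq, funext_iff] at hxy
    obtain ⟨hb, hi, hj, h0, hf5, hg6⟩ := hxy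
    have hvert : ∀ t, t ≤ k → (Y x).2.2.getVert t = (Y y).2.2.getVert t := by
      intro t
      induction t using Nat.strong_induction_on with
      | _ t ih =>
        intro htk
        rcases t with _ | s
        · exact h0
        · have hsk : s < k := htk
          have hs : (Y x).2.2.getVert s = (Y y).2.2.getVert s := ih s (by omega) (by omega)
          by_cases hsj : s = JJ x
          · have hIs : II x < s := hsj ▸ hIJ x
            have hI1 := ih (II x) (by omega) (by omega)
            have hI2 := ih (II x + 1) (by omega) (by omega)
            have hw : (Y x).2.2.getVert (JJ x) = (Y y).2.2.getVert (JJ y) := by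
              rw [← hj, ← hsj]
              exact hs
            have heq : s((Y y).2.2.getVert (II y), (Y y).2.2.getVert (II y + 1))
                = s((Y x).2.2.getVert (II x), (Y x).2.2.getVert (II x + 1)) := by
              rw [← hi, ← hI1, ← hI2]
            rw [heq, ← hw] at hf5
            have hmy : s((Y x).2.2.getVert (JJ x), (Y y).2.2.getVert (JJ y + 1)) ∈
                {e' ∈ Fb (s((Y x).2.2.getVert (II x), (Y x).2.2.getVert (II x + 1))) |
                  (Y x).2.2.getVert (JJ x) ∈ e'} := by
              rw [hw]
              refine Set.mem_sep ?_ (Sym2.mem_mk_left _ _)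
              have := hmem y
              rw [heq] at this
              exact this
            have hEJ := (hgF _ ((Y x).2.2.getVert (JJ x)) (heI x)).2
              (Set.mem_sep (hmem x) (Sym2.mem_mk_left _ _)) hmy hf5
            have hcr := Sym2.congr_right.1 hEJ
            calc (Y x).2.2.getVert (s+1) = (Y x).2.2.getVert (JJ x + 1) := by rw [hsj]
              _ = (Y y).2.2.getVert (JJ y + 1) := hcr
              _ = (Y y).2.2.getVert (s+1) := by rw [← hj, ← hsj]
          · have hjx := hJk x
            have hijx := hIJ x
            have key : ∃ m : Fin (k-1), (if (m:ℕ) < JJ x then (m:ℕ) else (m:ℕ)+1) = s := by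
              by_cases hlt : s < JJ x
              · exact ⟨⟨s, by omega⟩, by simp [hlt]⟩
              · refine ⟨⟨s-1, by omega⟩, ?_⟩
                have hnl : ¬ ((s-1 : ℕ) < JJ x) := by omega
                simp only [hnl, if_false]
                omega
            obtain ⟨m, hmval⟩ := key
            have h := hg6 m
            rw [← hj] at h
            rw [hmval] at h
            rw [← hs] at h
            refine hgV2 ((Y x).2.2.getVert s) ?_ ?_ h
            · exact (H.mem_neighborSet _ _).2 (hadjY x s hsk)
            · rw [hs]
              exact (H.mem_neighborSet _ _).2 (hadjY y s hsk)
    have hall : ∀ t, (Y x).2.2.getVert t = (Y y).2.2.getVert t := by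
      intro t
      rcases le_or_gt t k with h | h
      · exact hvert t h
      · rw [Walk.getVert_of_length_le _ (by rw [hYlen x]; omega),
          Walk.getVert_of_length_le _ (by rw [hYlen y]; omega)]
        have h1 := hvert k le_rfl
        rwa [Walk.getVert_of_length_le _ (le_of_eq (hYlen x)),
          Walk.getVert_of_length_le _ (le_of_eq (hYlen y))] at h1
    have hu : (Y x).1 = (Y y).1 := by
      have h1 := hall 0
      rwa [Walk.getVert_zero, Walk.getVert_zero] at h1
    have hv2 : (Y x).2.1 = (Y y).2.1 := by
      have h1 := hvert k le_rfl
      rwa [Walk.getVert_of_length_le _ (le_of_eq (hYlen x)),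
        Walk.getVert_of_length_le _ (le_of_eq (hYlen y))] at h1
    have hYeq : Y x = Y y := sigma_walk_ext _ _ ((hYlen x).trans (hYlen y).symm) hu hv2 hall
    apply Subtype.ext
    rw [hY x, hY y, hb, hYeq]
  have hcard : S.ncard ≤ 2 * k * k * Fintype.card V * f * Δ^(k-1) := by
    rw [← Nat.card_coe_set_eq]
    refine le_trans (Nat.card_le_card_of_injective Φ hinj) (le_of_eq ?_)
    simp only [Nat.card_eq_fintype_card, Fintype.card_prod, Fintype.card_bool,
      Fintype.card_fin, Fintype.card_fun]
    ring
  calc (S.ncard : ℝ) ≤ ((2 * k * k * Fintype.card V * f * Δ^(k-1) : ℕ) : ℝ) := by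
        exact_mod_cast hcard
    _ = 2 * (k:ℝ)^2 * Fintype.card V * f * (Δ:ℝ)^(k-1) := by push_cast; ring
end

section
/- Let Γ be an undirected unweighted graph in which every cycle has more than 2k edges (girth > 2k), and let f ≥ 1 be an integer. Let G be the graph obtained from Γ by replacing each vertex v with f copies v_1,…,v_f and replacing each edge (u,v) of Γ by the complete bipartite graph between {u_1,…,u_f} and {v_1,…,v_f}. Then every subgraph H of G that is an f-FD (2k−1)-spanner of G equals G itself. -/
open SimpleGraph

/-- `F` has faulty-degree at most `f`: every vertex is incident to at most `f` edges of `F`. -/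
def DegLE {V : Type} (F : Set (Sym2 V)) (f : ℕ) : Prop :=
  ∀ v : V, {e ∈ F | v ∈ e}.ncard ≤ f

/-- The graph obtained from `Γ` by replacing each vertex with `f` copies and each edge with
a complete bipartite graph between the copies of its endpoints. -/
def blowup {W : Type} (Γ : SimpleGraph W) (f : ℕ) : SimpleGraph (W × Fin f) where
  Adj x y := Γ.Adj x.1 y.1
  symm := ⟨fun _ _ h => Γ.adj_symm h⟩
  loopless := ⟨fun x h => Γ.irrefl h⟩

/-- If `Γ` has girth `> 2k` and `f ≥ 1`, then the only `f`-FD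
`(2k−1)`-spanner of the `f`-fold blowup `G` of `Γ` is `G` itself. -/
theorem blowup_spanner_lower_bound {W : Type} [Fintype W]
    (Γ : SimpleGraph W) (k f : ℕ) (hk : 0 < k) (hf : 1 ≤ f)
    (hgirth : ∀ (v : W) (p : Γ.Walk v v), p.IsCycle → 2 * k < p.length)
    (H : SimpleGraph (W × Fin f)) (hle : H ≤ blowup Γ f)
    (hspan : ∀ F : Set (Sym2 (W × Fin f)), F ⊆ (blowup Γ f).edgeSet → DegLE F f →
      ∀ u v : W × Fin f,
        (H.deleteEdges F).edist u v ≤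
          ((2 * k - 1 : ℕ) : ℕ∞) * ((blowup Γ f).deleteEdges F).edist u v) :
    H = blowup Γ f := by
  classical
  refine le_antisymm hle ?_
  intro x y hadj
  by_contra hxy
  have hΓ : Γ.Adj x.1 y.1 := hadj
  have hxyne : x.1 ≠ y.1 := hΓ.ne
  -- the fault set: all blowup edges between the two blocks, except s(x,y)
  set F : Set (Sym2 (W × Fin f)) :=
    {e ∈ (blowup Γ f).edgeSet | Sym2.map Prod.fst e = s(x.1, y.1)} \ {s(x, y)} with hF
  have hFsub : F ⊆ (blowup Γ f).edgeSet := fun e he => he.1.1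
  have hdeg : DegLE F f := by
    intro v
    set o : W := if v.1 = x.1 then y.1 else x.1 with ho
    have hsub : {e ∈ F | v ∈ e} ⊆ (fun j : Fin f => s(v, (o, j))) '' Set.univ := by
      rintro e ⟨⟨⟨heG, hproj⟩, -⟩, hv⟩
      obtain ⟨w, rfl⟩ := Sym2.mem_iff_exists.mp hv
      rw [Sym2.map_pair_eq] at hproj
      refine ⟨w.2, Set.mem_univ _, ?_⟩
      have hw1 : w.1 = o := by
        rcases Sym2.eq_iff.mp hproj with ⟨h1, h2⟩ | ⟨h1, h2⟩ <;>
          simp [ho, h1, h2, hxyne, hxyne.symm]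
      have hw : (o, w.2) = w := Prod.ext hw1.symm rfl
      exact congrArg (fun z => s(v, z)) hw
    calc {e ∈ F | v ∈ e}.ncard
        ≤ ((fun j : Fin f => s(v, (o, j))) '' Set.univ).ncard :=
          Set.ncard_le_ncard hsub (Set.finite_univ.image _)
      _ ≤ (Set.univ : Set (Fin f)).ncard := Set.ncard_image_le Set.finite_univ
      _ = f := by simp [Set.ncard_univ]
  -- the surviving graph still has the edge (x, y), so RHS distance is 1
  have hGadj : ((blowup Γ f).deleteEdges F).Adj x y := by
    rw [deleteEdges_adj]
    exact ⟨hadj, fun h => h.2 rfl⟩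
  have hedist1 : ((blowup Γ f).deleteEdges F).edist x y ≤ 1 := by
    have := SimpleGraph.edist_le (Walk.cons hGadj Walk.nil)
    simpa using this
  have hLHS : (H.deleteEdges F).edist x y ≤ ((2 * k - 1 : ℕ) : ℕ∞) := by
    calc (H.deleteEdges F).edist x y
        ≤ ((2 * k - 1 : ℕ) : ℕ∞) * ((blowup Γ f).deleteEdges F).edist x y :=
          hspan F hFsub hdeg x y
      _ ≤ ((2 * k - 1 : ℕ) : ℕ∞) * 1 := by gcongr
      _ = ((2 * k - 1 : ℕ) : ℕ∞) := mul_one _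
  -- extract a short walk in H minus F
  have hne : (H.deleteEdges F).edist x y ≠ ⊤ := by
    intro h
    rw [h, top_le_iff] at hLHS
    exact ENat.coe_ne_top _ hLHS
  obtain ⟨p, hp⟩ := SimpleGraph.exists_walk_of_edist_ne_top hne
  have hplen : (p.length : ℕ∞) ≤ ((2 * k - 1 : ℕ) : ℕ∞) := hp ▸ hLHS
  have hplen' : p.length ≤ 2 * k - 1 := by exact_mod_cast hplen
  -- project the walk to Γ minus the edge s(x.1, y.1)
  have hhom : ∀ a b : W × Fin f, (H.deleteEdges F).Adj a b →
      (Γ.deleteEdges {s(x.1, y.1)}).Adj a.1 b.1 := by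
    intro a b hab
    rw [deleteEdges_adj] at hab
    have haΓ : Γ.Adj a.1 b.1 := hle hab.1
    rw [deleteEdges_adj]
    refine ⟨haΓ, ?_⟩
    intro hmem
    apply hab.2
    have hproj : Sym2.map Prod.fst s(a, b) = s(x.1, y.1) := by
      rw [Sym2.map_pair_eq]; exact hmem
    refine ⟨⟨(blowup Γ f).mem_edgeSet.mpr (hle hab.1), hproj⟩, ?_⟩
    intro hsing
    have : s(a, b) = s(x, y) := hsing
    rcases Sym2.eq_iff.mp this with ⟨h1, h2⟩ | ⟨h1, h2⟩
    · exact hxy (h1 ▸ h2 ▸ hab.1)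
    · exact hxy ((h1 ▸ h2 ▸ hab.1 : H.Adj y x).symm)
  let φ : H.deleteEdges F →g Γ.deleteEdges {s(x.1, y.1)} :=
    ⟨Prod.fst, fun h => hhom _ _ h⟩
  let q : (Γ.deleteEdges {s(x.1, y.1)}).Walk x.1 y.1 := (p.map φ).bypass
  have hqpath : q.IsPath := (p.map φ).bypass_isPath
  have hqlen : q.length ≤ p.length := by
    have := (p.map φ).length_bypass_le
    rwa [Walk.length_map] at this
  -- transfer to Γ and close up into a cycle
  have hedges : ∀ e ∈ q.edges, e ∈ Γ.edgeSet := fun e he =>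
    edgeSet_mono (Γ.deleteEdges_le _) (q.edges_subset_edgeSet he)
  let q' : Γ.Walk x.1 y.1 := q.transfer Γ hedges
  have hq'path : q'.IsPath := hqpath.transfer hedges
  have hq'edges : s(y.1, x.1) ∉ q'.edges := by
    rw [Walk.edges_transfer]
    intro hmem
    have hadj' := Walk.adj_of_mem_edges q hmem
    rw [deleteEdges_adj] at hadj'
    exact hadj'.2 (by rw [Sym2.eq_swap]; rfl)
  have hcyc : (Walk.cons hΓ.symm q').IsCycle :=
    (Walk.cons_isCycle_iff q' hΓ.symm).mpr ⟨hq'path, hq'edges⟩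
  have := hgirth y.1 (Walk.cons hΓ.symm q') hcyc
  rw [Walk.length_cons, Walk.length_transfer] at this
  omega
end

section
/- Let G be a graph, F ⊆ E(G), and suppose there exists a d-routing of F in G with congestion c, where c < d. Then there exists a d-routing of F in G with congestion at most c such that for every edge (u,v) ∈ F, at least one of the d walks assigned to (u,v) uses no edge of F. -/
open SimpleGraph

/-- A `d`-routing of an edge set `F` in `G`: each edge `e = (u,v)` of `F` is assigned a
multiset of exactly `d` walks in `G` from `u` to `v`. -/
structure DRouting {V : Type} (G : SimpleGraph V) (F : Finset (Sym2 V)) (d : ℕ) where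
  src : Sym2 V → V
  dst : Sym2 V → V
  endpoint_eq : ∀ e ∈ F, e = s(src e, dst e)
  walks : (e : Sym2 V) → Multiset (G.Walk (src e) (dst e))
  card_walks : ∀ e ∈ F, Multiset.card (walks e) = d

/-- The routing has congestion at most `c`: every edge of `G` is traversed by at most `c`
of the assigned walks (counted with multiplicity over all of `F`). -/
def DRouting.CongestionLE {V : Type} [DecidableEq V] {G : SimpleGraph V}
    {F : Finset (Sym2 V)} {d : ℕ} (R : DRouting G F d) (c : ℕ) : Prop :=
  ∀ e' : Sym2 V, (∑ e ∈ F, Multiset.countP (fun w => e' ∈ w.edges) (R.walks e)) ≤ c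

set_option linter.unusedSectionVars false

section Helpers
variable {V : Type} [DecidableEq V] {G : SimpleGraph V}

def orient {x y a b : V} (ω : G.Walk x y) (h : s(a, b) = s(x, y)) : G.Walk a b :=
  if hc : a = x ∧ b = y then (ω.copy hc.1.symm hc.2.symm)
  else by
    have h2 := (Sym2.eq_iff.mp h).resolve_left hc
    exact ω.reverse.copy h2.1.symm h2.2.symm

lemma mem_edges_orient {x y a b : V} (ω : G.Walk x y) (h : s(a,b) = s(x,y)) (z : Sym2 V) :
    z ∈ (orient ω h).edges ↔ z ∈ ω.edges := by
  unfold orient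
  split
  · simp
  · simp

def splice {x y : V} (ω : G.Walk x y) : ∀ {a b : V}, G.Walk a b → G.Walk a b
  | _, _, Walk.nil => Walk.nil
  | a, _, Walk.cons (v := v) h p =>
    if hxy : s(a, v) = s(x, y) then (orient ω hxy).append (splice ω p)
    else Walk.cons h (splice ω p)

lemma mem_edges_splice {x y : V} (ω : G.Walk x y) {a b : V} (w : G.Walk a b) (z : Sym2 V)
    (hz : z ∈ (splice ω w).edges) : (z ∈ w.edges ∧ z ≠ s(x,y)) ∨ z ∈ ω.edges := by
  induction w with
  | nil => simp [splice] at hz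
  | cons h p ih =>
    rw [splice] at hz
    split at hz
    · rw [Walk.edges_append] at hz
      rcases List.mem_append.mp hz with h1 | h2
      · right; exact (mem_edges_orient _ _ _).mp h1
      · rcases ih h2 with ⟨h3, h4⟩ | h5
        · exact Or.inl ⟨List.mem_cons_of_mem _ h3, h4⟩
        · exact Or.inr h5
    · rename_i hne
      rcases List.mem_cons.mp hz with h1 | h2
      · exact Or.inl ⟨by simp [Walk.edges_cons, h1], by rw [h1]; exact hne⟩
      · rcases ih h2 with ⟨h3, h4⟩ | h5
        · exact Or.inl ⟨List.mem_cons_of_mem _ h3, h4⟩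
        · exact Or.inr h5

lemma mem_edges_splice_of {x y : V} (ω : G.Walk x y) {a b : V} (w : G.Walk a b) (z : Sym2 V)
    (hz : z ∈ w.edges) (hne : z ≠ s(x,y)) : z ∈ (splice ω w).edges := by
  induction w with
  | nil => simp at hz
  | cons h p ih =>
    rw [splice]
    rcases List.mem_cons.mp hz with h1 | h2
    · split
      · rename_i hxy; exact absurd (h1.trans hxy) hne
      · rw [Walk.edges_cons, h1]; exact List.mem_cons_self
    · split
      · rw [Walk.edges_append]; exact List.mem_append_right _ (ih h2)
      · exact List.mem_cons_of_mem _ (ih h2)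

lemma edges_of_length_le_one {a b : V} (w : G.Walk a b) (h : w.length ≤ 1) :
    ∀ z ∈ w.edges, z = s(a, b) := by
  cases w with
  | nil => simp
  | cons hadj p =>
    cases p with
    | nil => simp
    | cons h2 q => simp [Walk.length_cons] at h

def upd (src dst : Sym2 V → V) (W : ∀ g, Multiset (G.Walk (src g) (dst g))) (g0 : Sym2 V)
    (m : Multiset (G.Walk (src g0) (dst g0))) : ∀ g, Multiset (G.Walk (src g) (dst g)) :=
  fun g => if h : g = g0 then cast (by rw [h]) m else W g

lemma upd_same (src dst : Sym2 V → V) (W : ∀ g, Multiset (G.Walk (src g) (dst g))) (g0 : Sym2 V)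
    (m : Multiset (G.Walk (src g0) (dst g0))) : upd src dst W g0 m g0 = m := by
  unfold upd
  rw [dif_pos rfl]
  exact eq_of_heq (cast_heq _ m)

lemma upd_ne (src dst : Sym2 V → V) (W : ∀ g, Multiset (G.Walk (src g) (dst g))) (g0 : Sym2 V)
    (m : Multiset (G.Walk (src g0) (dst g0))) {g : Sym2 V} (h : g ≠ g0) :
    upd src dst W g0 m g = W g := dif_neg h

def fw (F : Finset (Sym2 V)) {a b : V} (w : G.Walk a b) : Prop := ∀ x ∈ w.edges, x ∉ F

instance {F : Finset (Sym2 V)} {a b : V} : DecidablePred (fun w : G.Walk a b => fw F w) :=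
  fun w => by unfold fw; exact List.decidableBAll _ _

lemma countP_exists_le {α β : Type*} [DecidableEq β] (s : Finset β) (q : β → α → Prop)
    [∀ f, DecidablePred (q f)] [DecidablePred (fun a => ∃ f ∈ s, q f a)] (m : Multiset α) :
    Multiset.countP (fun a => ∃ f ∈ s, q f a) m ≤ ∑ f ∈ s, Multiset.countP (q f) m := by
  induction m using Multiset.induction with
  | empty => simp
  | cons a m ih =>
    simp only [Multiset.countP_cons, Finset.sum_add_distrib]
    refine Nat.add_le_add ih ?_
    split
    · rename_i hex
      obtain ⟨f0, hf0, hq⟩ := hex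
      calc 1 = if q f0 a then 1 else 0 := by rw [if_pos hq]
        _ ≤ ∑ f ∈ s, if q f a then 1 else 0 :=
          Finset.single_le_sum (f := fun f => if q f a then 1 else 0)
            (fun _ _ => Nat.zero_le _) hf0
    · exact Nat.zero_le _

lemma countP_cons_erase {α : Type*} [DecidableEq α] (p : α → Prop) [DecidablePred p]
    {m : Multiset α} {u : α} (hu : u ∈ m) (v : α) :
    Multiset.countP p (v ::ₘ m.erase u) + (if p u then 1 else 0)
      = Multiset.countP p m + (if p v then 1 else 0) := by
  have h1 : Multiset.countP p m
      = Multiset.countP p (m.erase u) + (if p u then 1 else 0) := by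
    conv_lhs => rw [← Multiset.cons_erase hu]
    rw [Multiset.countP_cons]
  have h2 : Multiset.countP p (v ::ₘ m.erase u)
      = Multiset.countP p (m.erase u) + (if p v then 1 else 0) := Multiset.countP_cons _ _ _
  omega

lemma sum_map_cons_erase {α : Type*} [DecidableEq α] (φ : α → ℕ)
    {m : Multiset α} {u : α} (hu : u ∈ m) (v : α) :
    ((v ::ₘ m.erase u).map φ).sum + φ u = (m.map φ).sum + φ v := by
  have h1 : (m.map φ).sum = φ u + ((m.erase u).map φ).sum := by
    conv_lhs => rw [← Multiset.cons_erase hu]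
    rw [Multiset.map_cons, Multiset.sum_cons]
  have h2 : ((v ::ₘ m.erase u).map φ).sum = φ v + ((m.erase u).map φ).sum := by
    rw [Multiset.map_cons, Multiset.sum_cons]
  omega

lemma sum_split {F : Finset (Sym2 V)} {e f : Sym2 V} (he : e ∈ F) (hf : f ∈ F) (hef : e ≠ f)
    (ψ : Sym2 V → ℕ) :
    ∑ g ∈ F, ψ g = ψ e + ψ f + ∑ g ∈ (F.erase e).erase f, ψ g := by
  rw [← Finset.add_sum_erase _ _ he,
    ← Finset.add_sum_erase _ _ (Finset.mem_erase.mpr ⟨fun h => hef h.symm, hf⟩), add_assoc]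

def Bm {F : Finset (Sym2 V)} {d : ℕ} (R : DRouting G F d) : ℕ :=
  ∑ g ∈ F, Multiset.countP (fun w => fw F w) (R.walks g)

def Lm {F : Finset (Sym2 V)} {d : ℕ} (R : DRouting G F d) : ℕ :=
  ∑ g ∈ F, ((R.walks g).map (fun w => if fw F w then 0 else w.length)).sum

end Helpers

lemma exists_swap_pair {V : Type} [DecidableEq V] {G : SimpleGraph V} {F : Finset (Sym2 V)} {d c : ℕ} (hcd : c < d)
    (R : DRouting G F d) (hcong : R.CongestionLE c)
    (e0 : Sym2 V) (he0 : e0 ∈ F) (hbad : ∀ w ∈ R.walks e0, ¬ fw F w) :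
    ∃ e ∈ F, (∀ w ∈ R.walks e, ¬ fw F w) ∧
      ∃ w ∈ R.walks e, ∃ f ∈ F, f ∈ w.edges ∧ ∃ ω ∈ R.walks f, fw F ω := by
  by_contra hcon
  push_neg at hcon
  set U : Finset (Sym2 V) := F.filter (fun g => ∀ w ∈ R.walks g, ¬ fw F w) with hU
  have hU_sub : U ⊆ F := Finset.filter_subset _ _
  have he0U : e0 ∈ U := Finset.mem_filter.mpr ⟨he0, hbad⟩
  have hclosed : ∀ g ∈ U, ∀ w ∈ R.walks g, ∃ f ∈ U, f ∈ w.edges := by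
    intro g hg w hw
    obtain ⟨hgF, hgun⟩ := Finset.mem_filter.mp hg
    have hnf : ¬ fw F w := hgun w hw
    unfold fw at hnf
    push_neg at hnf
    obtain ⟨x, hx1, hx2⟩ := hnf
    refine ⟨x, Finset.mem_filter.mpr ⟨hx2, ?_⟩, hx1⟩
    intro ω hω hfree
    exact (hcon g hgF hgun w hw x hx2 hx1 ω hω) hfree
  have main : d * U.card ≤ c * U.card := by
    calc d * U.card = ∑ _g ∈ U, d := by rw [Finset.sum_const, smul_eq_mul, mul_comm]
      _ = ∑ g ∈ U, Multiset.card (R.walks g) := by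
          refine Finset.sum_congr rfl (fun g hg => ?_)
          rw [R.card_walks g (hU_sub hg)]
      _ = ∑ g ∈ U, Multiset.countP (fun w => ∃ f ∈ U, f ∈ w.edges) (R.walks g) := by
          refine Finset.sum_congr rfl (fun g hg => ?_)
          rw [Multiset.countP_eq_card.mpr (hclosed g hg)]
      _ ≤ ∑ g ∈ U, ∑ f ∈ U, Multiset.countP (fun w => f ∈ w.edges) (R.walks g) :=
          Finset.sum_le_sum (fun g _ => countP_exists_le U _ _)
      _ = ∑ f ∈ U, ∑ g ∈ U, Multiset.countP (fun w => f ∈ w.edges) (R.walks g) :=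
          Finset.sum_comm
      _ ≤ ∑ f ∈ U, ∑ g ∈ F, Multiset.countP (fun w => f ∈ w.edges) (R.walks g) :=
          Finset.sum_le_sum (fun f _ => Finset.sum_le_sum_of_subset hU_sub)
      _ ≤ ∑ _f ∈ U, c := Finset.sum_le_sum (fun f _ => hcong f)
      _ = c * U.card := by rw [Finset.sum_const, smul_eq_mul, mul_comm]
  have hpos : 0 < U.card := Finset.card_pos.mpr ⟨e0, he0U⟩
  have : d ≤ c := Nat.le_of_mul_le_mul_left
    (by rwa [mul_comm d, mul_comm c] at main) hpos
  omega

lemma step {V : Type} [DecidableEq V] {G : SimpleGraph V} {F : Finset (Sym2 V)}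
    (hF : (F : Set (Sym2 V)) ⊆ G.edgeSet) {d c : ℕ} (hcd : c < d)
    (R : DRouting G F d) (hcong : R.CongestionLE c)
    {e : Sym2 V} (heF : e ∈ F) (hun : ∀ w ∈ R.walks e, ¬ fw F w)
    {w : G.Walk (R.src e) (R.dst e)} (hw : w ∈ R.walks e)
    {f : Sym2 V} (hfF : f ∈ F) (hfw : f ∈ w.edges)
    {ω : G.Walk (R.src f) (R.dst f)} (hω : ω ∈ R.walks f) (hωfree : fw F ω) :
    ∃ R' : DRouting G F d, R'.CongestionLE c ∧
      (Bm R' + 1 = Bm R ∨ (Bm R' = Bm R ∧ Lm R' < Lm R)) := by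
  classical
  have hfxy : f = s(R.src f, R.dst f) := R.endpoint_eq f hfF
  have hexy : e = s(R.src e, R.dst e) := R.endpoint_eq e heF
  have hadjf : G.Adj (R.src f) (R.dst f) := by
    have hfe : f ∈ G.edgeSet := hF hfF
    rw [hfxy] at hfe
    exact G.mem_edgeSet.mp hfe
  have hfe : f ≠ e := by
    intro h
    subst h
    exact hun ω hω hωfree
  have hef : e ≠ f := fun h => hfe h.symm
  have hfnotω : f ∉ ω.edges := fun h => hωfree f h hfF
  set w' : G.Walk (R.src e) (R.dst e) := splice ω w with hw'def
  set single : G.Walk (R.src f) (R.dst f) := Walk.cons hadjf Walk.nil with hsingledef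
  have hsingle_edges : single.edges = [s(R.src f, R.dst f)] := by simp [hsingledef]
  have hsingle_len : single.length = 1 := by simp [hsingledef]
  have hw'sub : ∀ z ∈ w'.edges, (z ∈ w.edges ∧ z ≠ f) ∨ z ∈ ω.edges := by
    intro z hz
    rcases mem_edges_splice ω w z hz with ⟨h1, h2⟩ | h3
    · exact Or.inl ⟨h1, by rwa [← hfxy] at h2⟩
    · exact Or.inr h3
  have hfnotw' : f ∉ w'.edges := by
    intro h
    rcases hw'sub f h with ⟨_, h2⟩ | h3
    · exact h2 rfl
    · exact hfnotω h3
  have hwnf : ¬ fw F w := hun w hw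
  have hsinglenf : ¬ fw F single := by
    intro h
    exact h (s(R.src f, R.dst f)) (by rw [hsingle_edges]; exact List.mem_cons_self)
      (hfxy ▸ hfF)
  set me : Multiset (G.Walk (R.src e) (R.dst e)) := w' ::ₘ (R.walks e).erase w with hmedef
  set mf : Multiset (G.Walk (R.src f) (R.dst f)) := single ::ₘ (R.walks f).erase ω with hmfdef
  set W' := upd R.src R.dst (upd R.src R.dst R.walks e me) f mf with hW'def
  have hWf : W' f = mf := upd_same _ _ _ _ _
  have hWe : W' e = me := by
    rw [hW'def, upd_ne _ _ _ _ _ hef, upd_same]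
  have hWg : ∀ g, g ≠ e → g ≠ f → W' g = R.walks g := by
    intro g h1 h2
    rw [hW'def, upd_ne _ _ _ _ _ h2, upd_ne _ _ _ _ _ h1]
  have hd1 : 1 ≤ d := by omega
  have hcard : ∀ g ∈ F, Multiset.card (W' g) = d := by
    intro g hg
    by_cases h1 : g = e
    · subst h1
      rw [hWe, hmedef, Multiset.card_cons, Multiset.card_erase_of_mem hw,
        R.card_walks g hg, Nat.pred_eq_sub_one]
      omega
    · by_cases h2 : g = f
      · subst h2
        rw [hWf, hmfdef, Multiset.card_cons, Multiset.card_erase_of_mem hω,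
          R.card_walks g hg, Nat.pred_eq_sub_one]
        omega
      · rw [hWg g h1 h2]
        exact R.card_walks g hg
  refine ⟨⟨R.src, R.dst, R.endpoint_eq, W', hcard⟩, ?_, ?_⟩
  · -- congestion
    intro e'
    show (∑ g ∈ F, Multiset.countP (fun w => e' ∈ w.edges) (W' g)) ≤ c
    have hold := hcong e'
    have hsplit_new : ∑ g ∈ F, Multiset.countP (fun w => e' ∈ w.edges) (W' g)
        = Multiset.countP (fun w => e' ∈ w.edges) me
          + Multiset.countP (fun w => e' ∈ w.edges) mf
          + ∑ g ∈ (F.erase e).erase f, Multiset.countP (fun w => e' ∈ w.edges) (W' g) := by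
      rw [sum_split heF hfF hef, hWe, hWf]
    have hsplit_old : ∑ g ∈ F, Multiset.countP (fun w => e' ∈ w.edges) (R.walks g)
        = Multiset.countP (fun w => e' ∈ w.edges) (R.walks e)
          + Multiset.countP (fun w => e' ∈ w.edges) (R.walks f)
          + ∑ g ∈ (F.erase e).erase f, Multiset.countP (fun w => e' ∈ w.edges) (R.walks g) :=
      sum_split heF hfF hef _
    have hrest : ∑ g ∈ (F.erase e).erase f, Multiset.countP (fun w => e' ∈ w.edges) (W' g)
        = ∑ g ∈ (F.erase e).erase f, Multiset.countP (fun w => e' ∈ w.edges) (R.walks g) := by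
      refine Finset.sum_congr rfl (fun g hg => ?_)
      have h2 : g ≠ f := (Finset.mem_erase.mp hg).1
      have h1 : g ≠ e := (Finset.mem_erase.mp (Finset.mem_erase.mp hg).2).1
      rw [hWg g h1 h2]
    have he_eq : Multiset.countP (fun w => e' ∈ w.edges) me + (if e' ∈ w.edges then 1 else 0)
        = Multiset.countP (fun w => e' ∈ w.edges) (R.walks e)
          + (if e' ∈ w'.edges then 1 else 0) :=
      countP_cons_erase _ hw w'
    have hf_eq : Multiset.countP (fun w => e' ∈ w.edges) mf + (if e' ∈ ω.edges then 1 else 0)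
        = Multiset.countP (fun w => e' ∈ w.edges) (R.walks f)
          + (if e' ∈ single.edges then 1 else 0) :=
      countP_cons_erase _ hω single
    have hkey : (if e' ∈ w'.edges then 1 else 0) + (if e' ∈ single.edges then 1 else 0)
        ≤ (if e' ∈ w.edges then 1 else 0) + (if e' ∈ ω.edges then 1 else 0) := by
      by_cases he'f : e' = f
      · subst he'f
        rw [if_neg hfnotw', if_pos hfw]
        have : (if e' ∈ single.edges then 1 else 0) ≤ 1 := by split <;> omega
        omega
      · have hps : e' ∉ single.edges := by
          intro h
          rw [hsingle_edges, List.mem_singleton] at h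
          exact he'f (h.trans hfxy.symm)
        rw [if_neg hps]
        by_cases hpw' : e' ∈ w'.edges
        · rcases hw'sub e' hpw' with ⟨h1, _⟩ | h3
          · rw [if_pos hpw', if_pos h1]; omega
          · rw [if_pos hpw', if_pos h3]; omega
        · rw [if_neg hpw']; omega
    omega
  · -- measure decrease
    show Bm (⟨R.src, R.dst, R.endpoint_eq, W', hcard⟩ : DRouting G F d) + 1 = Bm R
      ∨ (Bm (⟨R.src, R.dst, R.endpoint_eq, W', hcard⟩ : DRouting G F d) = Bm R
          ∧ Lm (⟨R.src, R.dst, R.endpoint_eq, W', hcard⟩ : DRouting G F d) < Lm R)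
    have hBnew : Bm (⟨R.src, R.dst, R.endpoint_eq, W', hcard⟩ : DRouting G F d)
        = Multiset.countP (fun w => fw F w) me + Multiset.countP (fun w => fw F w) mf
          + ∑ g ∈ (F.erase e).erase f, Multiset.countP (fun w => fw F w) (W' g) := by
      show (∑ g ∈ F, Multiset.countP (fun w => fw F w) (W' g)) = _
      rw [sum_split heF hfF hef, hWe, hWf]
    have hBold : Bm R
        = Multiset.countP (fun w => fw F w) (R.walks e)
          + Multiset.countP (fun w => fw F w) (R.walks f)
          + ∑ g ∈ (F.erase e).erase f, Multiset.countP (fun w => fw F w) (R.walks g) :=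
      sum_split heF hfF hef _
    have hrestB : ∑ g ∈ (F.erase e).erase f, Multiset.countP (fun w => fw F w) (W' g)
        = ∑ g ∈ (F.erase e).erase f, Multiset.countP (fun w => fw F w) (R.walks g) := by
      refine Finset.sum_congr rfl (fun g hg => ?_)
      have h2 : g ≠ f := (Finset.mem_erase.mp hg).1
      have h1 : g ≠ e := (Finset.mem_erase.mp (Finset.mem_erase.mp hg).2).1
      rw [hWg g h1 h2]
    have heB : Multiset.countP (fun w => fw F w) me + (if fw F w then 1 else 0)
        = Multiset.countP (fun w => fw F w) (R.walks e) + (if fw F w' then 1 else 0) :=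
      countP_cons_erase _ hw w'
    have hfB : Multiset.countP (fun w => fw F w) mf + (if fw F ω then 1 else 0)
        = Multiset.countP (fun w => fw F w) (R.walks f) + (if fw F single then 1 else 0) :=
      countP_cons_erase _ hω single
    rw [if_neg hwnf] at heB
    rw [if_pos hωfree, if_neg hsinglenf] at hfB
    by_cases hB : fw F w'
    · right
      rw [if_pos hB] at heB
      constructor
      · omega
      · -- length measure
        have hLnew : Lm (⟨R.src, R.dst, R.endpoint_eq, W', hcard⟩ : DRouting G F d)
            = (me.map (fun w => if fw F w then 0 else w.length)).sum
              + (mf.map (fun w => if fw F w then 0 else w.length)).sum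
              + ∑ g ∈ (F.erase e).erase f,
                  ((W' g).map (fun w => if fw F w then 0 else w.length)).sum := by
          show (∑ g ∈ F, ((W' g).map (fun w => if fw F w then 0 else w.length)).sum) = _
          rw [sum_split heF hfF hef, hWe, hWf]
        have hLold : Lm R
            = ((R.walks e).map (fun w => if fw F w then 0 else w.length)).sum
              + ((R.walks f).map (fun w => if fw F w then 0 else w.length)).sum
              + ∑ g ∈ (F.erase e).erase f,
                  ((R.walks g).map (fun w => if fw F w then 0 else w.length)).sum :=
          sum_split heF hfF hef _
        have hrestL : ∑ g ∈ (F.erase e).erase f,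
              ((W' g).map (fun w => if fw F w then 0 else w.length)).sum
            = ∑ g ∈ (F.erase e).erase f,
              ((R.walks g).map (fun w => if fw F w then 0 else w.length)).sum := by
          refine Finset.sum_congr rfl (fun g hg => ?_)
          have h2 : g ≠ f := (Finset.mem_erase.mp hg).1
          have h1 : g ≠ e := (Finset.mem_erase.mp (Finset.mem_erase.mp hg).2).1
          rw [hWg g h1 h2]
        have heL : (me.map (fun w => if fw F w then 0 else w.length)).sum
              + (if fw F w then 0 else w.length)
            = ((R.walks e).map (fun w => if fw F w then 0 else w.length)).sum
              + (if fw F w' then 0 else w'.length) :=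
          sum_map_cons_erase _ hw w'
        have hfL : (mf.map (fun w => if fw F w then 0 else w.length)).sum
              + (if fw F ω then 0 else ω.length)
            = ((R.walks f).map (fun w => if fw F w then 0 else w.length)).sum
              + (if fw F single then 0 else single.length) :=
          sum_map_cons_erase _ hω single
        rw [if_neg hwnf, if_pos hB] at heL
        rw [if_pos hωfree, if_neg hsinglenf, hsingle_len] at hfL
        have hwlen : 2 ≤ w.length := by
          by_contra hlen
          push_neg at hlen
          have := edges_of_length_le_one w (by omega) f hfw
          rw [← hexy] at this
          exact hfe this
        omega
    · left
      rw [if_neg hB] at heB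
      omega

lemma reroute_aux {V : Type} [DecidableEq V] {G : SimpleGraph V} {F : Finset (Sym2 V)}
    (hF : (F : Set (Sym2 V)) ⊆ G.edgeSet) {d c : ℕ} (hcd : c < d) :
    ∀ b l : ℕ, ∀ R : DRouting G F d, R.CongestionLE c → Bm R ≤ b → Lm R ≤ l →
      ∃ R' : DRouting G F d, R'.CongestionLE c ∧ ∀ e ∈ F, ∃ w ∈ R'.walks e, fw F w := by
  intro b
  induction b using Nat.strong_induction_on with
  | _ b ihb =>
    intro l
    induction l using Nat.strong_induction_on with
    | _ l ihl =>
      intro R hc hB hL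
      by_cases hall : ∀ e ∈ F, ∃ w ∈ R.walks e, fw F w
      · exact ⟨R, hc, hall⟩
      · push_neg at hall
        obtain ⟨e0, he0, hbad⟩ := hall
        obtain ⟨e, heF, hun, w, hw, f, hfF, hfw, ω, hω, hωf⟩ :=
          exists_swap_pair hcd R hc e0 he0 hbad
        obtain ⟨R', hc', hdec⟩ := step hF hcd R hc heF hun hw hfF hfw hω hωf
        rcases hdec with h1 | ⟨h2, h3⟩
        · exact ihb (Bm R') (by omega) (Lm R') R' hc' le_rfl le_rfl
        · exact ihl (Lm R') (by omega) R' hc' (by omega) le_rfl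


/-- **rerouting lemma.** If `F` admits a `d`-routing in `G` with congestion
`c < d`, then it admits a `d`-routing with congestion at most `c` in which every edge of
`F` has at least one of its `d` walks avoiding all edges of `F`. -/
theorem rerouting_lemma {V : Type} [Fintype V] [DecidableEq V]
    (G : SimpleGraph V) (F : Finset (Sym2 V)) (hF : (F : Set (Sym2 V)) ⊆ G.edgeSet)
    (d c : ℕ) (hcd : c < d)
    (R : DRouting G F d) (hcong : R.CongestionLE c) :
    ∃ R' : DRouting G F d, R'.CongestionLE c ∧
      ∀ e ∈ F, ∃ w ∈ R'.walks e, ∀ e' ∈ w.edges, e' ∉ F := by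
  obtain ⟨R', hc', hfree⟩ := reroute_aux hF hcd (Bm R) (Lm R) R hcong le_rfl le_rfl
  exact ⟨R', hc', hfree⟩
end
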